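/- The Lambert W function satisfies W(z) = ln z − ln ln z + o(1) as z → ∞. -/

import Mathlib

open Filter

/-- `W(z) = ln z − ln ln z + o(1)` as `z → ∞`, for the principal branch of the
Lambert `W` function. -/
theorem lambertW_asymptotic (W : ℝ → ℝ)
    (hW : ∀ z : ℝ, 0 < z → W z * Real.exp (W z) = z) :
    Tendsto (fun z : ℝ => W z - (Real.log z - Real.log (Real.log z))) atTop (nhds 0) := by
  have hWpos : ∀ z : ℝ, 0 < z → 0 < W z := by
    intro z hz
    by_contra h
    push_neg at h
    have : W z * Real.exp (W z) ≤ 0 :=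
      mul_nonpos_of_nonpos_of_nonneg h (Real.exp_pos _).le
    linarith [hW z hz]
  have hlog : ∀ z : ℝ, 0 < z → Real.log z = W z + Real.log (W z) := by
    intro z hz
    have h := congrArg Real.log (hW z hz)
    rw [Real.log_mul (ne_of_gt (hWpos z hz)) (Real.exp_ne_zero _), Real.log_exp] at h
    linarith
  have hWtop : Tendsto W atTop atTop := by
    rw [tendsto_atTop]
    intro M
    filter_upwards [eventually_gt_atTop (max M 1 * Real.exp (max M 1)),
      eventually_gt_atTop 0] with z hz hz0
    by_contra h
    push_neg at h
    have h1 : W z ≤ max M 1 := le_trans h.le (le_max_left _ _)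
    have h2 : z ≤ max M 1 * Real.exp (max M 1) := by
      rw [← hW z hz0]
      exact mul_le_mul h1 (Real.exp_le_exp.2 h1) (Real.exp_pos _).le
        (le_trans (by norm_num) (le_max_right M 1))
    linarith
  have hdiv : Tendsto (fun z => Real.log (W z) / W z) atTop (nhds 0) := by
    have := Real.isLittleO_log_id_atTop.tendsto_div_nhds_zero
    exact this.comp hWtop
  have h1 : Tendsto (fun z => Real.log (1 + Real.log (W z) / W z)) atTop (nhds 0) := by
    have hc : Tendsto (fun t : ℝ => Real.log (1 + t)) (nhds 0) (nhds 0) := by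
      have := (Real.continuousAt_log (by norm_num : (1:ℝ) + 0 ≠ 0)).comp
        ((continuous_const.add continuous_id).continuousAt (x := (0:ℝ)))
      simpa [Function.comp_def] using this.tendsto
    exact hc.comp hdiv
  refine h1.congr' ?_
  filter_upwards [eventually_gt_atTop 1] with z hz
  have hz0 : 0 < z := lt_trans one_pos hz
  have hw := hWpos z hz0
  have hlz : 0 < Real.log z := Real.log_pos hz
  have key : 1 + Real.log (W z) / W z = Real.log z / W z := by
    field_simp
    linarith [hlog z hz0]
  rw [key, Real.log_div (ne_of_gt hlz) (ne_of_gt hw)]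
  linarith [hlog z hz0]
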